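/- Let L = L((ab)*) be the regular language of all words over {a,b} that are concatenations of zero or more copies of 'ab'. Given any directed graph G with vertices s and t, construct the undirected edge-labeled graph G′ with vertex set V(G) together with a new vertex m_{uv} for each directed edge (u,v) of G, where each directed edge (u,v) is replaced by an undirected edge {u, m_{uv}} labeled a and an undirected edge {m_{uv}, v} labeled b. Then there is a directed path from s to t in G if and only if there is a path from s to t in G′ whose yield belongs to L. -/

import Mathlib

inductive LabReaches {V α : Type*} (E : V → α → V → Prop) : V → List α → V → Prop
  | nil (v : V) : LabReaches E v [] v
  | cons {u v w : V} {a : α} {l : List α} :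
      E u a v → LabReaches E v l w → LabReaches E u (a :: l) w

/-- The language `(ab)*`, with `a` encoded as `false` and `b` as `true`. -/
def abStar : Set (List Bool) := {w | ∃ k : ℕ, w = (List.replicate k [false, true]).flatten}

/-- The directed "base" edges of the construction: for each directed edge `(u,v)` of `G`,
an edge `u → m_{uv}` labeled `a` (`false`) and an edge `m_{uv} → v` labeled `b` (`true`). -/
def baseEdges {V : Type*} (E : V → V → Prop) :
    (V ⊕ (V × V)) → Bool → (V ⊕ (V × V)) → Prop := fun x a y =>
  ∃ u v, E u v ∧
    ((x = Sum.inl u ∧ y = Sum.inr (u, v) ∧ a = false) ∨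
     (x = Sum.inr (u, v) ∧ y = Sum.inl v ∧ a = true))

/-- The undirected labeled graph `G'`: the symmetric closure of the base edges. -/
def primeEdges {V : Type*} (E : V → V → Prop) :
    (V ⊕ (V × V)) → Bool → (V ⊕ (V × V)) → Prop := fun x a y =>
  baseEdges E x a y ∨ baseEdges E y a x

lemma falseEdge {V : Type*} {E : V → V → Prop} {x : V} {y : V ⊕ (V × V)}
    (h : primeEdges E (Sum.inl x) false y) : ∃ v, E x v ∧ y = Sum.inr (x, v) := by
  rcases h with ⟨u, v, he, h⟩ | ⟨u, v, he, h⟩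
  · rcases h with ⟨h1, h2, _⟩ | ⟨h1, _, _⟩
    · exact ⟨v, by cases h1; exact he, by cases h1; exact h2⟩
    · simp at h1
  · rcases h with ⟨h1, h2, _⟩ | ⟨h1, h2, h3⟩
    · simp at h2
    · simp at h3

lemma trueEdge {V : Type*} {E : V → V → Prop} {u v : V} {y : V ⊕ (V × V)}
    (h : primeEdges E (Sum.inr (u, v)) true y) : y = Sum.inl v := by
  rcases h with ⟨u', v', he, h⟩ | ⟨u', v', he, h⟩
  · rcases h with ⟨h1, _, _⟩ | ⟨h1, h2, _⟩
    · simp at h1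
    · simp at h1; cases h1.1; cases h1.2; exact h2
  · rcases h with ⟨_, h2, h3⟩ | ⟨_, h2, _⟩
    · simp at h3
    · simp at h2

lemma backward {V : Type*} (E : V → V → Prop) :
    ∀ (k : ℕ) (x t : V),
      LabReaches (primeEdges E) (Sum.inl x) ((List.replicate k [false, true]).flatten) (Sum.inl t) →
      Relation.ReflTransGen E x t := by
  intro k
  induction k with
  | zero =>
    intro x t h
    simp only [List.replicate, List.flatten] at h
    cases h
    exact Relation.ReflTransGen.refl
  | succ n ih =>
    intro x t h
    simp only [List.replicate_succ, List.flatten_cons, List.cons_append, List.nil_append] at h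
    cases h with
    | cons h1 h' =>
      obtain ⟨v, hev, rfl⟩ := falseEdge h1
      cases h' with
      | cons h2 h'' =>
        have := trueEdge h2
        subst this
        exact Relation.ReflTransGen.head hev (ih v t h'')

/-- There is a directed path from `s` to `t` in `G` iff there is a path from `s` to `t`
in the undirected labeled graph `G'` whose yield is in `(ab)*`. -/
theorem stmt2 {V : Type*} (E : V → V → Prop) (s t : V) :
    Relation.ReflTransGen E s t ↔
      ∃ w ∈ abStar, LabReaches (primeEdges E) (Sum.inl s) w (Sum.inl t) := by
  constructor
  · intro h
    induction h using Relation.ReflTransGen.head_induction_on with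
    | refl => exact ⟨[], ⟨0, rfl⟩, LabReaches.nil _⟩
    | head huv _ ih =>
      rename_i u v _
      obtain ⟨w, ⟨k, rfl⟩, hw⟩ := ih
      refine ⟨(List.replicate (k + 1) [false, true]).flatten, ⟨k + 1, rfl⟩, ?_⟩
      simp only [List.replicate_succ, List.flatten_cons, List.cons_append, List.nil_append]
      exact LabReaches.cons (Or.inl ⟨u, v, huv, Or.inl ⟨rfl, rfl, rfl⟩⟩)
        (LabReaches.cons (Or.inl ⟨u, v, huv, Or.inr ⟨rfl, rfl, rfl⟩⟩) hw)
  · rintro ⟨w, ⟨k, rfl⟩, hw⟩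
    exact backward E k s t hw
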